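/- (Subregime B3.) Suppose c_H(0,·) and c_L(0,·) are continuous on [0,1], F_l > 0, 0 < p^d < (1−θ)·F_l and 0 < p^t_l < Δc^θ(σ̂^t_l) − F_l. Then there is a unique PBE (σ*, β*); it satisfies σ^t*_h = 0, σ^d*_H = 1, σ^d*_L = 0, σ^t*_l equals the unique σ_l ∈ (0,1) with Δc^θ(σ_l) = p^t_l + F_l, β*(h|H) = θ/(θ + (1−θ)σ^t*_l), β*(l|H) = (1−θ)σ^t*_l/(θ + (1−θ)σ^t*_l), β*(h|L) = 0 and β*(l|L) = 1. -/

import Mathlib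

open Set

/-- Perfect Bayesian equilibrium of the two-server misbehavior-inspection signaling game.
The strategy profile is `(sh, sl, dH, dL)` (misbehavior rates of types `h` and `l`, and the
operator's inspection probabilities on servers `H` and `L`) and the belief assessment is
`(bhH, blH, bhL, blL)`. -/
def IsPBE (θ pth ptl pd Fh Fl : ℝ) (cH cL : ℝ → ℝ → ℝ)
    (sh sl dH dL bhH blH bhL blL : ℝ) : Prop :=
  sh ∈ Icc (0:ℝ) 1 ∧ sl ∈ Icc (0:ℝ) 1 ∧ dH ∈ Icc (0:ℝ) 1 ∧ dL ∈ Icc (0:ℝ) 1 ∧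
  bhH ∈ Icc (0:ℝ) 1 ∧ blH = 1 - bhH ∧ bhL ∈ Icc (0:ℝ) 1 ∧ blL = 1 - bhL ∧
  -- sequential rationality of type h agents
  (0 < sh → -(cL sh sl) - pth - Fh * dL ≥ -(cH sh sl)) ∧
  (sh < 1 → -(cL sh sl) - pth - Fh * dL ≤ -(cH sh sl)) ∧
  -- sequential rationality of type l agents
  (0 < sl → -(cH sh sl) - ptl - Fl * dH ≥ -(cL sh sl)) ∧
  (sl < 1 → -(cH sh sl) - ptl - Fl * dH ≤ -(cL sh sl)) ∧
  -- operator optimality on servers H and L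
  (∀ x ∈ Icc (0:ℝ) 1, (-pd + Fl * blH) * x ≤ (-pd + Fl * blH) * dH) ∧
  (∀ x ∈ Icc (0:ℝ) 1, (-pd + Fh * bhL) * x ≤ (-pd + Fh * bhL) * dL) ∧
  -- consistency of beliefs (Bayes' rule)
  (0 < θ * (1 - sh) + (1 - θ) * sl →
    bhH = θ * (1 - sh) / (θ * (1 - sh) + (1 - θ) * sl)) ∧
  (0 < θ * sh + (1 - θ) * (1 - sl) →
    bhL = θ * sh / (θ * sh + (1 - θ) * (1 - sl)))

/-- Subregime B3: the unique PBE has full inspection on server H, with misbehavior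
rate solving `Δcᵗʰ(sl) = pᵗ_l + Fl`. -/
theorem subregime_B3
    (θ pth ptl pd Fh Fl : ℝ) (cH cL : ℝ → ℝ → ℝ)
    (hθ : θ ∈ Ioo (0:ℝ) 1) (hpth : 0 ≤ pth) (hptl : 0 < ptl)
    (hpd : 0 < pd) (hFh : 0 ≤ Fh) (hFl : 0 ≤ Fl)
    (hA1 : cH 0 0 < cL 0 0 ∧ cL 0 1 < cH 0 1)
    (hA2Hh : ∀ y ∈ Icc (0:ℝ) 1, StrictAntiOn (fun x => cH x y) (Icc 0 1))
    (hA2Hl : ∀ x ∈ Icc (0:ℝ) 1, StrictMonoOn (fun y => cH x y) (Icc 0 1))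
    (hA2Lh : ∀ y ∈ Icc (0:ℝ) 1, StrictMonoOn (fun x => cL x y) (Icc 0 1))
    (hA2Ll : ∀ x ∈ Icc (0:ℝ) 1, StrictAntiOn (fun y => cL x y) (Icc 0 1))
    (hcontH : ContinuousOn (fun y => cH 0 y) (Icc 0 1))
    (hcontL : ContinuousOn (fun y => cL 0 y) (Icc 0 1))
    (hFl' : 0 < Fl) (hpdlt : pd < (1 - θ) * Fl)
    (hcond : ptl < cL 0 (pd * θ / ((1 - θ) * (Fl - pd))) - cH 0 (pd * θ / ((1 - θ) * (Fl - pd))) - Fl) :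
    (∃ sh sl dH dL bhH blH bhL blL,
      IsPBE θ pth ptl pd Fh Fl cH cL sh sl dH dL bhH blH bhL blL) ∧
    ∀ sh sl dH dL bhH blH bhL blL,
      IsPBE θ pth ptl pd Fh Fl cH cL sh sl dH dL bhH blH bhL blL →
      sh = 0 ∧ dH = 1 ∧ dL = 0 ∧
        sl ∈ Ioo (0:ℝ) 1 ∧ cL 0 sl - cH 0 sl = ptl + Fl ∧
        (∀ y ∈ Ioo (0:ℝ) 1, cL 0 y - cH 0 y = ptl + Fl → y = sl) ∧
        bhH = θ / (θ + (1 - θ) * sl) ∧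
        blH = (1 - θ) * sl / (θ + (1 - θ) * sl) ∧
        bhL = 0 ∧ blL = 1 := by
  obtain ⟨hθ0, hθ1⟩ := hθ
  have h1θ : 0 < 1 - θ := by linarith
  have hFp : 0 < Fl - pd := by nlinarith
  set s : ℝ := pd * θ / ((1 - θ) * (Fl - pd)) with hs
  have hden : 0 < (1 - θ) * (Fl - pd) := mul_pos h1θ hFp
  have hs0 : 0 < s := div_pos (mul_pos hpd hθ0) hden
  have hs1 : s < 1 := by
    rw [hs, div_lt_one hden]; nlinarith
  have hsmem : s ∈ Icc (0:ℝ) 1 := ⟨hs0.le, hs1.le⟩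
  have hanti : StrictAntiOn (fun y => cL 0 y - cH 0 y) (Icc 0 1) := by
    intro a ha b hb hab
    have h1 := hA2Ll 0 (by constructor <;> norm_num) ha hb hab
    have h2 := hA2Hl 0 (by constructor <;> norm_num) ha hb hab
    simp only at h1 h2 ⊢
    linarith
  have hcont : ContinuousOn (fun y => cL 0 y - cH 0 y) (Icc 0 1) := hcontL.sub hcontH
  have hΔ1 : cL 0 1 - cH 0 1 < 0 := by linarith [hA1.2]
  have hmemI : ptl + Fl ∈ Ioo ((fun y => cL 0 y - cH 0 y) 1) ((fun y => cL 0 y - cH 0 y) s) := by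
    simp only
    exact ⟨by linarith, by linarith⟩
  obtain ⟨sl, hslmem, hsleq⟩ :=
    intermediate_value_Ioo' (le_of_lt hs1)
      (hcont.mono (Icc_subset_Icc hs0.le le_rfl)) hmemI
  simp only at hsleq
  have hsl0 : 0 < sl := lt_trans hs0 hslmem.1
  have hsl1 : sl < 1 := hslmem.2
  have hD : 0 < θ + (1 - θ) * sl := by nlinarith [mul_nonneg h1θ.le hsl0.le]
  have hDne : θ + (1 - θ) * sl ≠ 0 := ne_of_gt hD
  constructor
  · -- existence
    refine ⟨0, sl, 1, 0, θ / (θ + (1 - θ) * sl), 1 - θ / (θ + (1 - θ) * sl), 0, 1, ?_⟩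
    have hblH : 1 - θ / (θ + (1 - θ) * sl) = (1 - θ) * sl / (θ + (1 - θ) * sl) := by
      field_simp; ring
    have hkey : pd * θ < sl * ((1 - θ) * (Fl - pd)) := (div_lt_iff₀ hden).mp hslmem.1
    have hc : 0 ≤ -pd + Fl * (1 - θ / (θ + (1 - θ) * sl)) := by
      rw [hblH, show -pd + Fl * ((1 - θ) * sl / (θ + (1 - θ) * sl))
          = (Fl * ((1 - θ) * sl) - pd * (θ + (1 - θ) * sl)) / (θ + (1 - θ) * sl) from by
        field_simp; ring]
      apply div_nonneg _ hD.le
      nlinarith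
    refine ⟨by norm_num, ⟨hsl0.le, hsl1.le⟩, by norm_num, by norm_num,
      ⟨div_nonneg hθ0.le hD.le, by
        rw [div_le_one hD]; nlinarith [mul_nonneg h1θ.le hsl0.le]⟩, rfl,
      by norm_num, by norm_num, ?_, ?_, ?_, ?_, ?_, ?_, ?_, ?_⟩
    · intro h; exact absurd h (by norm_num)
    · intro _
      simp only [mul_zero, mul_one]
      linarith
    · intro _
      simp only [mul_one]
      linarith
    · intro _
      simp only [mul_one]
      linarith
    · intro x hx
      have := mul_le_mul_of_nonneg_left hx.2 hc
      linarith
    · intro x hx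
      simp only [mul_zero, add_zero]
      have h1 : 0 ≤ pd * x := mul_nonneg hpd.le hx.1
      nlinarith
    · intro _; norm_num
    · intro _; simp
  · -- uniqueness
    intro sh sl' dH dL bhH blH bhL blL hP
    obtain ⟨hsh, hsl, hdH, hdL, hbhH, hblH, hbhL, hblL,
      hSRh1, hSRh2, hSRl1, hSRl2, hOH, hOL, hconsH, hconsL⟩ := hP
    -- Step A : sh = 0
    have hsh0 : sh = 0 := by
      by_contra h
      have hshpos : 0 < sh := lt_of_le_of_ne hsh.1 (Ne.symm h)
      have h1 := hSRh1 hshpos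
      have hHL : cL sh sl' ≤ cH sh sl' := by
        have := mul_nonneg hFh hdL.1
        linarith
      have hsl'0 : sl' = 0 := by
        by_contra h2
        have hpos : 0 < sl' := lt_of_le_of_ne hsl.1 (Ne.symm h2)
        have h3 := hSRl1 hpos
        have := mul_nonneg hFl hdH.1
        linarith
      subst hsl'0
      have hx1 := hA2Hh 0 (by constructor <;> norm_num)
        (⟨le_rfl, by norm_num⟩ : (0:ℝ) ∈ Icc (0:ℝ) 1) ⟨hsh.1, hsh.2⟩ hshpos
      have hx2 := hA2Lh 0 (by constructor <;> norm_num)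
        (⟨le_rfl, by norm_num⟩ : (0:ℝ) ∈ Icc (0:ℝ) 1) ⟨hsh.1, hsh.2⟩ hshpos
      simp only at hx1 hx2
      linarith [hA1.1]
    subst hsh0
    -- Step B : sl' < 1
    have hsl'1 : sl' < 1 := by
      rcases lt_or_eq_of_le hsl.2 with h | h
      · exact h
      · exfalso
        have h3 := hSRl1 (by rw [h]; norm_num)
        rw [h] at h3
        have := mul_nonneg hFl hdH.1
        linarith
    -- Step C : bhL = 0, dL = 0
    have hbhL0 : bhL = 0 := by
      have h1 := hconsL (by linarith [mul_pos h1θ (show (0:ℝ) < 1 - sl' by linarith), mul_nonneg hθ0.le hsl.1])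
      simpa using h1
    have hdL0 : dL = 0 := by
      have h0 := hOL 0 ⟨le_rfl, by norm_num⟩
      rw [hbhL0] at h0
      simp only [mul_zero, add_zero] at h0
      have h1 : pd * dL ≤ 0 := by linarith
      have h2 : 0 ≤ pd * dL := mul_nonneg hpd.le hdL.1
      have h3 : pd * dL = 0 := le_antisymm h1 h2
      rcases mul_eq_zero.mp h3 with h | h
      · exact absurd h (ne_of_gt hpd)
      · exact h
    -- Step D : 0 < sl'
    have hsl'0 : 0 < sl' := by
      by_contra h
      have h0 : sl' = 0 := le_antisymm (not_lt.mp h) hsl.1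
      subst h0
      have hbhH1 : bhH = 1 := by
        have h1 := hconsH (by norm_num <;> linarith)
        norm_num at h1
        rw [h1, div_self (ne_of_gt hθ0)]
      have hdH0 : dH = 0 := by
        have h1 := hOH 0 ⟨le_rfl, by norm_num⟩
        rw [hblH, hbhH1] at h1
        norm_num at h1
        have h2 : pd * dH ≤ 0 := by linarith
        have h3 : 0 ≤ pd * dH := mul_nonneg hpd.le hdH.1
        have h4 : pd * dH = 0 := le_antisymm h2 h3
        rcases mul_eq_zero.mp h4 with h | h
        · exact absurd h (ne_of_gt hpd)
        · exact h
      have h2 := hSRl2 (by norm_num)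
      rw [hdH0] at h2
      simp only [mul_zero] at h2
      have h3 := hanti (⟨le_rfl, by norm_num⟩ : (0:ℝ) ∈ Icc (0:ℝ) 1) hsmem hs0
      simp only at h3
      linarith
    -- SR equality for type l
    have heq : cL 0 sl' - cH 0 sl' = ptl + Fl * dH := by
      have h1 := hSRl1 hsl'0
      have h2 := hSRl2 hsl'1
      linarith
    have hD' : 0 < θ + (1 - θ) * sl' := by linarith [mul_nonneg h1θ.le hsl'0.le]
    have hbhHval : bhH = θ / (θ + (1 - θ) * sl') := by
      have h1 := hconsH (by norm_num <;> linarith [mul_nonneg h1θ.le hsl'0.le])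
      rw [h1]; norm_num
    -- Step F : dH = 1
    have hdH1 : dH = 1 := by
      by_contra h
      have hdHlt : dH < 1 := lt_of_le_of_ne hdH.2 h
      have h1 := hOH 1 ⟨by norm_num, le_rfl⟩
      have hcle : -pd + Fl * blH ≤ 0 := by
        by_contra hpos
        push_neg at hpos
        have h2 := mul_lt_mul_of_pos_left hdHlt hpos
        linarith
      have hblHval : blH = (1 - θ) * sl' / (θ + (1 - θ) * sl') := by
        rw [hblH, hbhHval]; field_simp; ring
      rw [hblHval] at hcle
      have h3 : Fl * ((1 - θ) * sl' / (θ + (1 - θ) * sl'))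
          = Fl * ((1 - θ) * sl') / (θ + (1 - θ) * sl') := by ring
      rw [h3] at hcle
      have h2 : Fl * ((1 - θ) * sl') ≤ pd * (θ + (1 - θ) * sl') := by
        have h4 := mul_nonpos_of_nonpos_of_nonneg hcle hD'.le
        have h5 : (-pd + Fl * ((1 - θ) * sl') / (θ + (1 - θ) * sl')) * (θ + (1 - θ) * sl')
            = Fl * ((1 - θ) * sl') - pd * (θ + (1 - θ) * sl') := by
          field_simp; ring
        rw [h5] at h4
        linarith
      have hle : sl' ≤ s := by
        rw [hs, le_div_iff₀ hden]; linarith [h2]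
      have h4 : cL 0 s - cH 0 s ≤ cL 0 sl' - cH 0 sl' :=
        hanti.antitoneOn ⟨hsl'0.le, hsl'1.le⟩ hsmem hle
      have h6 : 0 ≤ Fl * (1 - dH) := mul_nonneg hFl (by linarith)
      linarith [h6]
    subst hdH1
    rw [mul_one] at heq
    refine ⟨rfl, rfl, hdL0, ⟨hsl'0, hsl'1⟩, heq, ?_, hbhHval, ?_, hbhL0, by
      rw [hblL, hbhL0]; norm_num⟩
    · intro y hy hyeq
      refine hanti.injOn ⟨hy.1.le, hy.2.le⟩ ⟨hsl'0.le, hsl'1.le⟩ ?_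
      show cL 0 y - cH 0 y = cL 0 sl' - cH 0 sl'
      linarith
    · rw [hblH, hbhHval]
      field_simp; ring
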